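/- Suppose b j = γ for all j, where γ ∈ [0,1). Let ρ(X) denote the maximum modulus of the complex eigenvalues of a real square matrix X. Then ρ(A) + ρ(R) = ρ(A + R) = 1, namely ρ(A) = 1 − γ, ρ(R) = γ, and ρ(A + R) = 1, and in each case the maximum modulus is attained at a real eigenvalue. -/

import Mathlib

open Matrix

attribute [local instance] Matrix.linftyOpNormedRing Matrix.linftyOpNormedAlgebra

/-- A nonnegative real matrix with all row sums equal to `r` has spectral radius `r`,
attained at the real eigenvalue `r`. -/
lemma spec_key {n : ℕ} (hn : 1 ≤ n) (M : Matrix (Fin n) (Fin n) ℝ)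
    (hpos : ∀ i j, 0 ≤ M i j) (r : ℝ) (hrow : ∀ i, ∑ j, M i j = r) :
    IsGreatest ((fun z : ℂ => ‖z‖) '' spectrum ℂ (M.map Complex.ofReal)) r ∧
      ((r : ℝ) : ℂ) ∈ spectrum ℂ (M.map Complex.ofReal) := by
  have hne : Nonempty (Fin n) := ⟨⟨0, hn⟩⟩
  have hr0 : 0 ≤ r := by
    rw [← hrow ⟨0, hn⟩]; exact Finset.sum_nonneg fun j _ => hpos _ j
  have hmem : ((r : ℝ) : ℂ) ∈ spectrum ℂ (M.map Complex.ofReal) := by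
    rw [spectrum.mem_iff]
    intro hu
    rw [Matrix.isUnit_iff_isUnit_det, isUnit_iff_ne_zero] at hu
    apply hu
    rw [← Matrix.exists_mulVec_eq_zero_iff]
    refine ⟨fun _ => 1, fun h => by simpa using congrFun h ⟨0, hn⟩, ?_⟩
    ext i
    simp only [Matrix.mulVec, dotProduct, Matrix.sub_apply, Matrix.map_apply,
      Matrix.algebraMap_matrix_apply, mul_one, Pi.zero_apply]
    simp [Algebra.algebraMap_self_apply, Finset.sum_ite_eq, ← Complex.ofReal_sum, hrow i]
  refine ⟨⟨⟨((r : ℝ) : ℂ), hmem, by simp [abs_of_nonneg hr0]⟩, ?_⟩, hmem⟩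
  rintro y ⟨z, hz, rfl⟩
  rw [spectrum.mem_iff] at hz
  have hdet : (algebraMap ℂ _ z - M.map Complex.ofReal).det = 0 := by
    by_contra h
    exact hz ((Matrix.isUnit_iff_isUnit_det _).mpr (isUnit_iff_ne_zero.mpr h))
  obtain ⟨v, hv0, hv⟩ := (Matrix.exists_mulVec_eq_zero_iff).mpr hdet
  have heig : ∀ i, z * v i = ∑ j, ((M i j : ℂ)) * v j := by
    intro i
    have h := congrFun hv i
    simp only [Matrix.mulVec, dotProduct, Matrix.sub_apply, Matrix.map_apply,
      Matrix.algebraMap_matrix_apply, Pi.zero_apply, sub_mul] at h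
    simp only [ite_mul, zero_mul, Finset.sum_ite_eq, Finset.mem_univ, if_true,
      Algebra.algebraMap_self_apply, Finset.sum_sub_distrib] at h
    linear_combination h
  obtain ⟨i0, -, hmax⟩ := Finset.exists_max_image Finset.univ
    (fun i => ‖v i‖) Finset.univ_nonempty
  have hpos0 : 0 < ‖v i0‖ := by
    obtain ⟨k, hk⟩ := Function.ne_iff.mp hv0
    exact lt_of_lt_of_le (by simpa using hk) (hmax k (Finset.mem_univ k))
  have hkey : ‖z‖ * ‖v i0‖ ≤ r * ‖v i0‖ := by
    calc ‖z‖ * ‖v i0‖ = ‖z * v i0‖ := (norm_mul z (v i0)).symm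
      _ = ‖∑ j, ((M i0 j : ℂ)) * v j‖ := by rw [heig i0]
      _ ≤ ∑ j, ‖((M i0 j : ℂ)) * v j‖ :=
          norm_sum_le Finset.univ (fun j => ((M i0 j : ℂ)) * v j)
      _ = ∑ j, M i0 j * ‖v j‖ := by
          refine Finset.sum_congr rfl fun j _ => ?_
          rw [norm_mul, Complex.norm_of_nonneg (hpos i0 j)]
      _ ≤ ∑ j, M i0 j * ‖v i0‖ :=
          Finset.sum_le_sum fun j _ =>
            mul_le_mul_of_nonneg_left (hmax j (Finset.mem_univ j)) (hpos i0 j)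
      _ = r * ‖v i0‖ := by rw [← Finset.sum_mul, hrow i0]
  exact le_of_mul_le_mul_right hkey hpos0

/-- The inverse of `1 - K` is entrywise nonnegative when `K` is entrywise nonnegative
with `‖K‖ < 1` in the `L∞`-operator norm. -/
lemma inv_one_sub_nonneg {n : ℕ} (K : Matrix (Fin n) (Fin n) ℝ)
    (hpos : ∀ i j, 0 ≤ K i j) (hnorm : ‖K‖ < 1) : ∀ i j, 0 ≤ (1 - K)⁻¹ i j := by
  have : CompleteSpace (Matrix (Fin n) (Fin n) ℝ) := FiniteDimensional.complete ℝ _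
  have hpow : ∀ (m : ℕ) i j, 0 ≤ (K ^ m) i j := by
    intro m
    induction m with
    | zero => intro i j; rw [pow_zero, Matrix.one_apply]; split <;> norm_num
    | succ m ih =>
        intro i j
        rw [pow_succ, Matrix.mul_apply]
        exact Finset.sum_nonneg fun k _ => mul_nonneg (ih i k) (hpos k j)
  intro i j
  rw [Matrix.nonsing_inv_eq_ringInverse]
  have hsum := hasSum_geom_series_inverse K hnorm
  let e : Matrix (Fin n) (Fin n) ℝ →ₗ[ℝ] ℝ :=
    { toFun := fun M => M i j, map_add' := fun _ _ => rfl, map_smul' := fun _ _ => rfl }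
  have hec : Continuous e := e.continuous_of_finiteDimensional
  have h2 : HasSum (fun m => (K ^ m) i j) ((Ring.inverse (1 - K)) i j) :=
    hsum.map e.toAddMonoidHom hec
  exact hasSum_le (fun m => hpow m i j) hasSum_zero h2

/-- Suppose `b j = γ` for all `j`, where `γ ∈ [0,1)`. Let `ρ(X)`
denote the maximum modulus of the complex eigenvalues of `X`. Then
`ρ(A) + ρ(R) = ρ(A + R) = 1`, namely `ρ(A) = 1 − γ`, `ρ(R) = γ`, and
`ρ(A + R) = 1`, and in each case the maximum modulus is attained at a real
eigenvalue. -/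
theorem stmt_12 (n : ℕ) (hn : 1 ≤ n)
    (F : Matrix (Fin n) (Fin n) ℝ)
    (hFnonneg : ∀ i j, 0 ≤ F i j)
    (hFrow : ∀ i, ∑ j, F i j = 1)
    (b : Fin n → ℝ) (hb0 : ∀ j, 0 ≤ b j) (hb1 : ∀ j, b j < 1)
    (γ : ℝ) (hγ0 : 0 ≤ γ) (hγ1 : γ < 1) (hbγ : ∀ j, b j = γ)
    (K : Matrix (Fin n) (Fin n) ℝ)
    (hK : ∀ i j, K i j = F i j * b j)
    (hInv : IsUnit (1 - K))
    (S : Matrix (Fin n) (Fin n) ℝ)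
    (hS : S = (1 - K)⁻¹ * F)
    (A R : Matrix (Fin n) (Fin n) ℝ)
    (hA : ∀ i j, A i j = (1 - b i) * S i j * (1 - b j))
    (hR : ∀ i j, R i j = (1 - b i) * S i j * b j) :
    (IsGreatest ((fun z : ℂ => ‖z‖) '' spectrum ℂ (A.map Complex.ofReal)) (1 - γ) ∧
      ((1 - γ : ℝ) : ℂ) ∈ spectrum ℂ (A.map Complex.ofReal)) ∧
    (IsGreatest ((fun z : ℂ => ‖z‖) '' spectrum ℂ (R.map Complex.ofReal)) γ ∧
      (γ : ℂ) ∈ spectrum ℂ (R.map Complex.ofReal)) ∧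
    (IsGreatest ((fun z : ℂ => ‖z‖) '' spectrum ℂ ((A + R).map Complex.ofReal)) 1 ∧
      (1 : ℂ) ∈ spectrum ℂ ((A + R).map Complex.ofReal)) ∧
    (1 - γ) + γ = 1 := by
  have h1γ : (0:ℝ) < 1 - γ := by linarith
  have hKentry : ∀ i j, K i j = F i j * γ := fun i j => by rw [hK, hbγ]
  have hKpos : ∀ i j, 0 ≤ K i j := fun i j => by
    rw [hKentry]; exact mul_nonneg (hFnonneg i j) hγ0
  have hKrow : ∀ i, ∑ j, K i j = γ := by
    intro i; simp_rw [hKentry]; rw [← Finset.sum_mul, hFrow i, one_mul]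
  have hKnorm : ‖K‖ < 1 := by
    rw [Matrix.linfty_opNorm_def]
    have hsup : ((Finset.univ : Finset (Fin n)).sup fun i => ∑ j, ‖K i j‖₊) ≤ γ.toNNReal := by
      apply Finset.sup_le; intro i _
      rw [← NNReal.coe_le_coe, NNReal.coe_sum, Real.coe_toNNReal _ hγ0]
      have he : ∀ j, ((‖K i j‖₊ : ℝ)) = K i j := fun j => by
        rw [coe_nnnorm, Real.norm_eq_abs, abs_of_nonneg (hKpos i j)]
      rw [Finset.sum_congr rfl fun j _ => he j, hKrow i]
    have h2 := NNReal.coe_le_coe.mpr hsup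
    rw [Real.coe_toNNReal _ hγ0] at h2
    linarith
  have hdet : IsUnit (1 - K).det := (Matrix.isUnit_iff_isUnit_det _).mp hInv
  have hIpos := inv_one_sub_nonneg K hKpos hKnorm
  have hSpos : ∀ i j, 0 ≤ S i j := by
    intro i j; rw [hS, Matrix.mul_apply]
    exact Finset.sum_nonneg fun k _ => mul_nonneg (hIpos i k) (hFnonneg k j)
  have h1 : (1 - K) * S = F := by
    rw [hS, ← Matrix.mul_assoc, Matrix.mul_nonsing_inv _ hdet, Matrix.one_mul]
  set u : Fin n → ℝ := fun i => ∑ j, S i j with hu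
  have hone : ∀ i (w : Fin n → ℝ), ∑ k, (1 : Matrix (Fin n) (Fin n) ℝ) i k * w k = w i := by
    intro i w
    simp [Matrix.one_apply, ite_mul, zero_mul, Finset.sum_ite_eq]
  have hrec : ∀ i, u i - γ * ∑ k, F i k * u k = 1 := by
    intro i
    have h2 : ∑ k, ((1 : Matrix (Fin n) (Fin n) ℝ) i k - K i k) * u k = 1 := by
      calc ∑ k, ((1 : Matrix (Fin n) (Fin n) ℝ) i k - K i k) * u k
          = ∑ k, ∑ j, ((1 : Matrix (Fin n) (Fin n) ℝ) i k - K i k) * S k j := by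
            refine Finset.sum_congr rfl fun k _ => ?_
            rw [← Finset.mul_sum]
        _ = ∑ j, ∑ k, ((1 : Matrix (Fin n) (Fin n) ℝ) i k - K i k) * S k j :=
            Finset.sum_comm
        _ = ∑ j, ((1 - K) * S) i j := by
            refine Finset.sum_congr rfl fun j _ => ?_
            rw [Matrix.mul_apply]
            refine Finset.sum_congr rfl fun k _ => ?_
            rw [Matrix.sub_apply]
        _ = ∑ j, F i j := by rw [h1]
        _ = 1 := hFrow i
    have h3 : ∑ k, ((1 : Matrix (Fin n) (Fin n) ℝ) i k - K i k) * u k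
        = u i - γ * ∑ k, F i k * u k := by
      simp_rw [sub_mul]
      rw [Finset.sum_sub_distrib, hone i u, Finset.mul_sum]
      congr 1
      refine Finset.sum_congr rfl fun k _ => ?_
      rw [hKentry]; ring
    rw [← h3, h2]
  have hrowS : ∀ i, u i = (1 - γ)⁻¹ := by
    set v : Fin n → ℝ := fun i => u i - (1 - γ)⁻¹ with hvdef
    have hveq : (1 - K) *ᵥ v = 0 := by
      funext i
      have hFv : ∑ k, F i k * v k = (∑ k, F i k * u k) - (1 - γ)⁻¹ := by
        simp_rw [hvdef, mul_sub]
        rw [Finset.sum_sub_distrib, ← Finset.sum_mul, hFrow i, one_mul]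
      have : ((1 - K) *ᵥ v) i = ∑ k, ((1 : Matrix (Fin n) (Fin n) ℝ) i k - K i k) * v k := by
        rw [Matrix.mulVec, dotProduct]
        refine Finset.sum_congr rfl fun k _ => ?_
        rw [Matrix.sub_apply]
      rw [Pi.zero_apply, this]
      have h3 : ∑ k, ((1 : Matrix (Fin n) (Fin n) ℝ) i k - K i k) * v k
          = v i - γ * ∑ k, F i k * v k := by
        simp_rw [sub_mul]
        rw [Finset.sum_sub_distrib, hone i v, Finset.mul_sum]
        congr 1
        refine Finset.sum_congr rfl fun k _ => ?_
        rw [hKentry]; ring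
      rw [h3, hFv, hvdef]
      have hrc := hrec i
      have hinv : (1 - γ)⁻¹ * (1 - γ) = 1 := inv_mul_cancel₀ h1γ.ne'
      simp only
      nlinarith [hrc, hinv]
    have hv0 : v = 0 := by
      by_contra hne
      have hd0 : (1 - K).det = 0 := Matrix.exists_mulVec_eq_zero_iff.mp ⟨v, hne, hveq⟩
      rw [hd0] at hdet
      simp at hdet
    intro i
    have := congrFun hv0 i
    simp only [hvdef, Pi.zero_apply] at this
    linarith [this]
  have hApos : ∀ i j, 0 ≤ A i j := by
    intro i j
    rw [hA, hbγ, hbγ]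
    exact mul_nonneg (mul_nonneg h1γ.le (hSpos i j)) h1γ.le
  have hRpos : ∀ i j, 0 ≤ R i j := by
    intro i j
    rw [hR, hbγ, hbγ]
    exact mul_nonneg (mul_nonneg h1γ.le (hSpos i j)) hγ0
  have hArow : ∀ i, ∑ j, A i j = 1 - γ := by
    intro i
    have : ∑ j, A i j = (1 - γ) * u i * (1 - γ) := by
      rw [hu]
      simp_rw [hA, hbγ]
      rw [← Finset.sum_mul, ← Finset.mul_sum]
    rw [this, hrowS i]
    field_simp
  have hRrow : ∀ i, ∑ j, R i j = γ := by
    intro i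
    have : ∑ j, R i j = (1 - γ) * u i * γ := by
      rw [hu]
      simp_rw [hR, hbγ]
      rw [← Finset.sum_mul, ← Finset.mul_sum]
    rw [this, hrowS i]
    field_simp
  have hMpos : ∀ i j, 0 ≤ (A + R) i j := fun i j =>
    add_nonneg (hApos i j) (hRpos i j)
  have hMrow : ∀ i, ∑ j, (A + R) i j = 1 := by
    intro i
    simp_rw [Matrix.add_apply]
    rw [Finset.sum_add_distrib, hArow i, hRrow i]
    ring
  obtain ⟨hA1, hA2⟩ := spec_key hn A hApos (1 - γ) hArow
  obtain ⟨hR1, hR2⟩ := spec_key hn R hRpos γ hRrow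
  obtain ⟨hM1, hM2⟩ := spec_key hn (A + R) hMpos 1 hMrow
  refine ⟨⟨hA1, hA2⟩, ⟨hR1, hR2⟩, ⟨hM1, by exact_mod_cast hM2⟩, by ring⟩
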